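/- Let q, t be formal variables and fix r ≥ 2. For a partition λ define N_λ = ∏_{□∈λ, r | h_λ(□)} (1 − q^{a_λ(□)+1} t^{−l_λ(□)}) (1 − q^{−a_λ(□)} t^{l_λ(□)+1}). Then for any addable corner ■ of λ of color i one has the cancellation identity (N_{λ∪■}/N_λ) · ∏_{□∈R_i(λ∪■)} (1 − q t χ_□/χ_■) / ∏_{□∈A_i(λ∪■)} (1 − χ_□/χ_■) = ∏_{□∈A_i(λ)} (1 − q t χ_■/χ_□) / ∏_{□∈R_i(λ)} (1 − χ_■/χ_□), as an identity of rational functions in q, t. -/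

import Mathlib

open MvPolynomial

/-- The field of rational functions in `q` and `t`. -/
abbrev QT : Type := FractionRing (MvPolynomial (Fin 2) ℚ)

noncomputable def q : QT := algebraMap (MvPolynomial (Fin 2) ℚ) QT (X 0)
noncomputable def t : QT := algebraMap (MvPolynomial (Fin 2) ℚ) QT (X 1)

/-- The character of a cell `(row, column)`: `χ = q^column * t^row`. -/
noncomputable def chi (c : ℕ × ℕ) : QT := q ^ c.2 * t ^ c.1

/-- The color of a cell `(row, column)`: its content `row - column` mod `r`. -/
def cellColor (r : ℕ) (c : ℕ × ℕ) : ZMod r := (((c.1 : ℤ) - (c.2 : ℤ) : ℤ) : ZMod r)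

def IsAddable (μ : YoungDiagram) (c : ℕ × ℕ) : Prop :=
  c ∉ μ ∧ IsLowerSet (insert c (μ.cells : Set (ℕ × ℕ)))

def IsRemovable (μ : YoungDiagram) (c : ℕ × ℕ) : Prop :=
  c ∈ μ ∧ IsLowerSet ((μ.cells : Set (ℕ × ℕ)) \ {c})

/-- Arm length of a cell. -/
def arm (μ : YoungDiagram) (c : ℕ × ℕ) : ℕ := μ.rowLen c.1 - (c.2 + 1)

/-- Leg length of a cell. -/
def leg (μ : YoungDiagram) (c : ℕ × ℕ) : ℕ := μ.colLen c.2 - (c.1 + 1)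

/-- Hook length of a cell. -/
def hook (μ : YoungDiagram) (c : ℕ × ℕ) : ℕ := arm μ c + leg μ c + 1

/-- `N_λ = ∏_{□∈λ, r | h(□)} (1 - q^{a+1} t^{-l})(1 - q^{-a} t^{l+1})`. -/
noncomputable def normN (r : ℕ) (μ : YoungDiagram) : QT :=
  ∏ c ∈ μ.cells.filter (fun c => r ∣ hook μ c),
    (1 - q ^ (arm μ c + 1) * t ^ (-(leg μ c : ℤ))) *
      (1 - q ^ (-(arm μ c : ℤ)) * t ^ (leg μ c + 1))

lemma algmap_inj : Function.Injective (algebraMap (MvPolynomial (Fin 2) ℚ) QT) :=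
  IsFractionRing.injective _ _

lemma q_ne_zero : q ≠ 0 := by
  simp [q, map_eq_zero_iff _ algmap_inj, X_ne_zero]

lemma t_ne_zero : t ≠ 0 := by
  simp [t, map_eq_zero_iff _ algmap_inj, X_ne_zero]

lemma qt_pow_inj {a b c d : ℕ} (h : q ^ a * t ^ b = q ^ c * t ^ d) : a = c ∧ b = d := by
  have : (X (0:Fin 2) : MvPolynomial (Fin 2) ℚ) ^ a * X 1 ^ b = X 0 ^ c * X 1 ^ d := by
    apply algmap_inj
    simpa [q, t, map_mul, map_pow] using h
  rw [X_pow_eq_monomial, X_pow_eq_monomial, X_pow_eq_monomial, X_pow_eq_monomial,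
    monomial_mul, monomial_mul, one_mul] at this
  have h2 := monomial_eq_monomial_iff (R := ℚ) _ _ (1:ℚ) 1 |>.mp this
  rcases h2 with h2 | h2
  · have h0 := congrArg (fun f => f 0) h2.1
    have h1 := congrArg (fun f => f 1) h2.1
    simp [Finsupp.single_apply] at h0 h1
    exact ⟨h0, h1⟩
  · exact absurd h2.1 one_ne_zero

lemma zpow_split (u : QT) (hu : u ≠ 0) (m : ℤ) :
    u ^ m * u ^ ((-m).toNat : ℕ) = u ^ (m.toNat : ℕ) := by
  rw [← zpow_natCast u ((-m).toNat), ← zpow_natCast u m.toNat, ← zpow_add₀ hu]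
  congr 1
  omega

lemma qt_zpow_eq_one_iff {m n : ℤ} : q ^ m * t ^ n = 1 ↔ m = 0 ∧ n = 0 := by
  constructor
  · intro h
    have key : q ^ (m.toNat : ℕ) * t ^ (n.toNat : ℕ) = q ^ ((-m).toNat : ℕ) * t ^ ((-n).toNat : ℕ) := by
      rw [← zpow_split q q_ne_zero m, ← zpow_split t t_ne_zero n,
        show q ^ m * q ^ ((-m).toNat : ℕ) * (t ^ n * t ^ ((-n).toNat : ℕ)) =
          (q ^ m * t ^ n) * (q ^ ((-m).toNat : ℕ) * t ^ ((-n).toNat : ℕ)) by ring, h, one_mul]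
    obtain ⟨h1, h2⟩ := qt_pow_inj key
    omega
  · rintro ⟨rfl, rfl⟩; simp

lemma one_sub_qt_zpow_ne {m n : ℤ} (h : ¬(m = 0 ∧ n = 0)) : (1:QT) - q ^ m * t ^ n ≠ 0 := by
  intro hc
  exact h (qt_zpow_eq_one_iff.mp (by linear_combination -hc))

lemma rowLen_le_iff {μ : YoungDiagram} {i j : ℕ} : μ.rowLen i ≤ j ↔ (i, j) ∉ μ := by
  rw [YoungDiagram.mem_iff_lt_rowLen]; omega

lemma colLen_le_iff {μ : YoungDiagram} {i j : ℕ} : μ.colLen j ≤ i ↔ (i, j) ∉ μ := by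
  rw [YoungDiagram.mem_iff_lt_colLen]; omega

lemma isAddable_iff {μ : YoungDiagram} {a b : ℕ} :
    IsAddable μ (a, b) ↔ (a, b) ∉ μ ∧ (a = 0 ∨ (a - 1, b) ∈ μ) ∧ (b = 0 ∨ (a, b - 1) ∈ μ) := by
  constructor
  · rintro ⟨hnm, hl⟩
    refine ⟨hnm, ?_, ?_⟩
    · rcases Nat.eq_zero_or_pos a with h | h
      · exact Or.inl h
      · refine Or.inr ?_
        have := hl (a := (a, b)) (b := (a - 1, b)) ⟨by omega, le_rfl⟩ (Set.mem_insert _ _)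
        rcases this with h' | h'
        · exact absurd (Prod.ext_iff.mp h') (by simp; omega)
        · simpa using h'
    · rcases Nat.eq_zero_or_pos b with h | h
      · exact Or.inl h
      · refine Or.inr ?_
        have := hl (a := (a, b)) (b := (a, b - 1)) ⟨le_rfl, by omega⟩ (Set.mem_insert _ _)
        rcases this with h' | h'
        · exact absurd (Prod.ext_iff.mp h') (by simp; omega)
        · simpa using h'
  · rintro ⟨hnm, h1, h2⟩
    refine ⟨hnm, ?_⟩
    rintro ⟨u, v⟩ ⟨w, z⟩ ⟨hle1, hle2⟩ hmem
    simp only [Set.mem_insert_iff, Finset.coe_sort_coe, Finset.mem_coe,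
      YoungDiagram.mem_cells] at hmem ⊢
    rcases hmem with heq | hmem
    · obtain ⟨ha, hb⟩ := Prod.ext_iff.mp heq
      simp only [] at ha hb hle1 hle2
      have hwa : w ≤ a := by omega
      have hzb : z ≤ b := by omega
      by_cases hu : w = a ∧ z = b
      · exact Or.inl (by simp [hu.1, hu.2])
      · refine Or.inr ?_
        rcases Nat.lt_or_ge w a with h | h
        · rcases h1 with h1 | h1
          · omega
          · exact μ.up_left_mem (by omega) hzb h1
        · have hva : w = a := le_antisymm hwa h
          have hvb : z < b := by
            rcases Nat.lt_or_ge z b with h' | h'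
            · exact h'
            · exact absurd ⟨hva, le_antisymm hzb h'⟩ hu
          rcases h2 with h2 | h2
          · omega
          · exact μ.up_left_mem hwa (by omega) h2
    · exact Or.inr (μ.up_left_mem hle1 hle2 hmem)

lemma isRemovable_iff {μ : YoungDiagram} {a b : ℕ} :
    IsRemovable μ (a, b) ↔ (a, b) ∈ μ ∧ (a + 1, b) ∉ μ ∧ (a, b + 1) ∉ μ := by
  constructor
  · rintro ⟨hm, hl⟩
    refine ⟨hm, ?_, ?_⟩
    · intro hc
      have := hl (a := (a + 1, b)) (b := (a, b)) ⟨by omega, le_rfl⟩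
        ⟨by simpa using hc, by simp⟩
      simp at this
    · intro hc
      have := hl (a := (a, b + 1)) (b := (a, b)) ⟨le_rfl, by omega⟩
        ⟨by simpa using hc, by simp⟩
      simp at this
  · rintro ⟨hm, h1, h2⟩
    refine ⟨hm, ?_⟩
    rintro ⟨u, v⟩ ⟨w, z⟩ ⟨hle1, hle2⟩ ⟨hmem, hne⟩
    simp only [Finset.coe_sort_coe, Finset.mem_coe, YoungDiagram.mem_cells] at hmem
    constructor
    · simpa using μ.up_left_mem hle1 hle2 hmem
    · intro hc
      obtain ⟨hw, hz⟩ := Prod.ext_iff.mp (Set.mem_singleton_iff.mp hc)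
      simp only [] at hw hz hle1 hle2
      rcases Nat.lt_or_ge a u with h | h
      · exact h1 (μ.up_left_mem (by omega) (by omega) hmem)
      · have hau : u = a := by omega
        rcases Nat.lt_or_ge b v with h' | h'
        · exact h2 (μ.up_left_mem (by omega) (by omega) hmem)
        · exact hne (by simp [Prod.ext_iff]; omega)

lemma isAddable_col {μ : YoungDiagram} {a b : ℕ} :
    IsAddable μ (a, b) ↔ a = μ.colLen b ∧ (b = 0 ∨ μ.colLen b < μ.colLen (b - 1)) := by
  rw [isAddable_iff]
  simp only [YoungDiagram.mem_iff_lt_colLen]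
  have hm : b ≠ 0 → μ.colLen b ≤ μ.colLen (b - 1) := fun h => μ.colLen_anti _ _ (by omega)
  omega

lemma isAddable_row {μ : YoungDiagram} {a b : ℕ} :
    IsAddable μ (a, b) ↔ b = μ.rowLen a ∧ (a = 0 ∨ μ.rowLen a < μ.rowLen (a - 1)) := by
  rw [isAddable_iff]
  simp only [YoungDiagram.mem_iff_lt_rowLen]
  have hm : a ≠ 0 → μ.rowLen a ≤ μ.rowLen (a - 1) := fun h => μ.rowLen_anti _ _ (by omega)
  omega

lemma isRemovable_col {μ : YoungDiagram} {a b : ℕ} :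
    IsRemovable μ (a, b) ↔ a + 1 = μ.colLen b ∧ μ.colLen (b + 1) < μ.colLen b := by
  rw [isRemovable_iff]
  simp only [YoungDiagram.mem_iff_lt_colLen]
  omega

lemma isRemovable_row {μ : YoungDiagram} {a b : ℕ} :
    IsRemovable μ (a, b) ↔ b + 1 = μ.rowLen a ∧ μ.rowLen (a + 1) < μ.rowLen a := by
  rw [isRemovable_iff]
  simp only [YoungDiagram.mem_iff_lt_rowLen]
  omega

open Finset in
lemma telescope (U V u : QT) (hU : U ≠ 0) (hV : V ≠ 0) (hu : u ≠ 0)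
    (x y : ℕ) (h : ℕ → ℕ)
    (hanti : ∀ j, j < y → h (j + 1) ≤ h j)
    (hx : ∀ j, j < y → x + 1 ≤ h j)
    (hy : h y = x)
    (pc pd : ℕ → Prop) [DecidablePred pc] [DecidablePred pd]
    (hpcd : ∀ j, 0 < j → j < y → h j = h (j - 1) → (pc j ↔ pd (j - 1))) :
    (∏ j ∈ (Finset.range y).filter pc,
        (1 - U * V * u / (U ^ j * V ^ (h j))) * (1 - U ^ j * V ^ (h j) / u)) *
      (∏ j ∈ (Finset.range y).filter (fun j => h (j + 1) < h j ∧ pd j),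
        (1 - u / (U ^ j * V ^ (h j - 1))) * (1 - U * V * (U ^ j * V ^ (h j - 1)) / u)) =
    (∏ j ∈ (Finset.range y).filter (fun j => (j = 0 ∨ h j < h (j - 1)) ∧ pc j),
        (1 - U * V * u / (U ^ j * V ^ (h j))) * (1 - U ^ j * V ^ (h j) / u)) *
      (∏ j ∈ (Finset.range y).filter pd,
        (1 - u / (U ^ j * V ^ (h j - 1))) * (1 - U * V * (U ^ j * V ^ (h j - 1)) / u)) := by
  set Φ : ℕ → QT := fun j => (1 - U * V * u / (U ^ j * V ^ (h j))) * (1 - U ^ j * V ^ (h j) / u)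
    with hΦ
  set Γ : ℕ → QT := fun j =>
      (1 - u / (U ^ j * V ^ (h j - 1))) * (1 - U * V * (U ^ j * V ^ (h j - 1)) / u) with hΓ
  have split1 : ∏ j ∈ (range y).filter pc, Φ j =
      (∏ j ∈ (range y).filter (fun j => (j = 0 ∨ h j < h (j - 1)) ∧ pc j), Φ j) *
        ∏ j ∈ (range y).filter (fun j => ¬(j = 0 ∨ h j < h (j - 1)) ∧ pc j), Φ j := by
    rw [← Finset.prod_filter_mul_prod_filter_not ((range y).filter pc)
      (fun j => j = 0 ∨ h j < h (j - 1)), Finset.filter_filter, Finset.filter_filter]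
    congr 1 <;> (apply Finset.prod_congr _ (fun _ _ => rfl)) <;> (ext j; simp; tauto)
  have split2 : ∏ j ∈ (range y).filter pd, Γ j =
      (∏ j ∈ (range y).filter (fun j => h (j + 1) < h j ∧ pd j), Γ j) *
        ∏ j ∈ (range y).filter (fun j => ¬(h (j + 1) < h j) ∧ pd j), Γ j := by
    rw [← Finset.prod_filter_mul_prod_filter_not ((range y).filter pd)
      (fun j => h (j + 1) < h j), Finset.filter_filter, Finset.filter_filter]
    congr 1 <;> (apply Finset.prod_congr _ (fun _ _ => rfl)) <;> (ext j; simp; tauto)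
  have key : ∏ j ∈ (range y).filter (fun j => ¬(j = 0 ∨ h j < h (j - 1)) ∧ pc j), Φ j =
      ∏ j ∈ (range y).filter (fun j => ¬(h (j + 1) < h j) ∧ pd j), Γ j := by
    apply Finset.prod_nbij' (fun j => j - 1) (fun j => j + 1)
    · intro a ha
      simp only [Finset.mem_filter, Finset.mem_range] at ha ⊢
      obtain ⟨hay, hn, hpc⟩ := ha
      push_neg at hn
      have ha0' : a ≠ 0 := hn.1
      have heq : h a = h (a - 1) := by
        have := hanti (a - 1) (by omega)
        have h2 := hn.2
        rw [show a - 1 + 1 = a by omega] at this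
        omega
      refine ⟨by omega, ?_, ?_⟩
      · rw [show a - 1 + 1 = a by omega]; omega
      · exact (hpcd a (by omega) (by omega) heq).mp hpc
    · intro a ha
      simp only [Finset.mem_filter, Finset.mem_range] at ha ⊢
      obtain ⟨hay, hnlt, hpd⟩ := ha
      have heq : h (a + 1) = h a := le_antisymm (hanti a hay) (by omega)
      have hay1 : a + 1 < y := by
        rcases Nat.lt_or_ge (a + 1) y with h' | h'
        · exact h'
        · have he : a + 1 = y := by omega
          have h2 : h (a + 1) = x := by rw [he, hy]
          have := hx a hay
          omega
      refine ⟨hay1, ?_, ?_⟩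
      · push_neg
        refine ⟨by omega, ?_⟩
        simp only [Nat.add_sub_cancel]
        omega
      · exact (hpcd (a + 1) (by omega) hay1 (by simpa using heq)).mpr hpd
    · intro a ha
      simp only [Finset.mem_filter, Finset.mem_range] at ha
      have : a ≠ 0 := by tauto
      omega
    · intro a _; omega
    · intro a ha
      simp only [Finset.mem_filter, Finset.mem_range] at ha
      obtain ⟨hay, hn, hpc⟩ := ha
      push_neg at hn
      have ha0 : a ≠ 0 := hn.1
      have heq : h a = h (a - 1) := by
        have := hanti (a - 1) (by omega)
        rw [show a - 1 + 1 = a by omega] at this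
        have := hn.2
        omega
      have hha : 1 ≤ h a := by have := hx a hay; omega
      have eU : U ^ a = U ^ (a - 1) * U := by
        rw [← pow_succ]; congr 1; omega
      have eV : V ^ (h a) = V ^ (h a - 1) * V := by
        rw [← pow_succ]; congr 1; omega
      rw [hΦ, hΓ]
      simp only []
      rw [← heq, eU, eV]
      have hne : (U * V : QT) ≠ 0 := mul_ne_zero hU hV
      congr 1
      · rw [show U ^ (a-1) * U * (V ^ (h a - 1) * V)
            = (U * V) * (U ^ (a-1) * V ^ (h a - 1)) by ring,
          mul_div_mul_left _ _ hne]
      · congr 1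
        ring
  rw [split1, split2, key]
  ring

lemma mono_div (a b c d : ℕ) :
    (q ^ a * t ^ b) / (q ^ c * t ^ d) = q ^ ((a:ℤ) - c) * t ^ ((b:ℤ) - d) := by
  rw [mul_div_mul_comm, ← zpow_natCast q a, ← zpow_natCast t b, ← zpow_natCast q c,
    ← zpow_natCast t d, ← zpow_sub₀ q_ne_zero, ← zpow_sub₀ t_ne_zero]

lemma qt_mul_mono (a b : ℕ) : q * t * (q ^ a * t ^ b) = q ^ (a + 1) * t ^ (b + 1) := by
  ring

lemma one_sub_mono_div_ne {a b c d : ℕ} (h : ¬(a = c ∧ b = d)) :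
    (1:QT) - (q ^ a * t ^ b) / (q ^ c * t ^ d) ≠ 0 := by
  rw [mono_div]
  apply one_sub_qt_zpow_ne
  omega

lemma mono_ne_zero (a b : ℕ) : (q:QT) ^ a * t ^ b ≠ 0 :=
  mul_ne_zero (pow_ne_zero _ q_ne_zero) (pow_ne_zero _ t_ne_zero)

lemma mono_eq_mono {a b c d : ℤ} (h1 : a = c) (h2 : b = d) :
    (q:QT) ^ a * t ^ b = q ^ c * t ^ d := by rw [h1, h2]

lemma npow_zpow_q (a : ℕ) : (q:QT) ^ a = q ^ ((a:ℕ):ℤ) := (zpow_natCast q a).symm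
lemma npow_zpow_t (a : ℕ) : (t:QT) ^ a = t ^ ((a:ℕ):ℤ) := (zpow_natCast t a).symm

lemma one_ne_zero_zmod {r : ℕ} (hr : 2 ≤ r) : (1 : ZMod r) ≠ 0 := by
  intro h
  have : ((1:ℕ) : ZMod r) = 0 := by simpa using h
  rw [ZMod.natCast_eq_zero_iff 1 r] at this
  have := Nat.le_of_dvd one_pos this
  omega

open Finset in
lemma addable_set_eq (r : ℕ) (hr : 2 ≤ r) (lam : YoungDiagram) (x y : ℕ) (i : ZMod r)
    (hrx : lam.rowLen x = y) (hcy : lam.colLen y = x)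
    (hcx : ∀ j, j < y → x + 1 ≤ lam.colLen j) (hry : ∀ k, k < x → y + 1 ≤ lam.rowLen k)
    (hcy1 : lam.colLen (y + 1) ≤ x)
    (hbi : cellColor r (x, y) = i) :
    {c : ℕ × ℕ | IsAddable lam c ∧ cellColor r c = i} =
      ↑(insert ((x : ℕ), y)
        ((((range y).filter (fun j => (j = 0 ∨ lam.colLen j < lam.colLen (j - 1)) ∧
              cellColor r (lam.colLen j, j) = i)).image (fun j => (lam.colLen j, j))) ∪
         (((range x).filter (fun k => (k = 0 ∨ lam.rowLen k < lam.rowLen (k - 1)) ∧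
              cellColor r (k, lam.rowLen k) = i)).image (fun k => (k, lam.rowLen k))))) := by
  ext c
  obtain ⟨a, j⟩ := c
  simp only [Set.mem_setOf_eq, Finset.coe_insert, Set.mem_insert_iff, Finset.coe_union,
    Set.mem_union, Finset.coe_image, Set.mem_image, Finset.mem_coe, Finset.mem_filter,
    Finset.mem_range, Prod.mk.injEq]
  constructor
  · rintro ⟨hadd, hcolor⟩
    obtain ⟨ha, hpa⟩ := isAddable_col.mp hadd
    rcases lt_trichotomy j y with hj | hj | hj
    · exact Or.inr (Or.inl ⟨j, ⟨hj, hpa, by rw [← ha]; exact hcolor⟩, ha.symm, rfl⟩)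
    · rw [hj] at ha
      exact Or.inl ⟨by omega, hj⟩
    · obtain ⟨ha', hpa'⟩ := isAddable_row.mp hadd
      have hax : a ≤ x := le_trans (ha ▸ lam.colLen_anti _ _ (by omega)) hcy1
      have haxx : a ≠ x := by
        intro h
        rw [h, hrx] at ha'
        omega
      refine Or.inr (Or.inr ⟨a, ⟨by omega, hpa', by rw [← ha']; exact hcolor⟩, rfl, ha'.symm⟩)
  · rintro (⟨h1, h2⟩ | ⟨j', ⟨hj', hpa, hcolor⟩, rfl, rfl⟩ | ⟨k, ⟨hk, hpa, hcolor⟩, rfl, rfl⟩)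
    · rw [h1, h2]
      refine ⟨isAddable_col.mpr ⟨hcy.symm, ?_⟩, hbi⟩
      rcases Nat.eq_zero_or_pos y with h | h
      · exact Or.inl h
      · exact Or.inr (by have := hcx (y - 1) (by omega); omega)
    · exact ⟨isAddable_col.mpr ⟨rfl, hpa⟩, hcolor⟩
    · exact ⟨isAddable_row.mpr ⟨rfl, hpa⟩, hcolor⟩

open Finset in
lemma removable_set_eq (r : ℕ) (hr : 2 ≤ r) (lam : YoungDiagram) (x y : ℕ) (i : ZMod r)
    (hrx : lam.rowLen x = y) (hcy : lam.colLen y = x)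
    (hcx : ∀ j, j < y → x + 1 ≤ lam.colLen j) (hry : ∀ k, k < x → y + 1 ≤ lam.rowLen k)
    (hcy1 : lam.colLen (y + 1) ≤ x)
    (hbi : cellColor r (x, y) = i) :
    {c : ℕ × ℕ | IsRemovable lam c ∧ cellColor r c = i} =
      ↑((((range y).filter (fun j => lam.colLen (j + 1) < lam.colLen j ∧
              cellColor r (lam.colLen j - 1, j) = i)).image (fun j => (lam.colLen j - 1, j))) ∪
         (((range x).filter (fun k => lam.rowLen (k + 1) < lam.rowLen k ∧
              cellColor r (k, lam.rowLen k - 1) = i)).image (fun k => (k, lam.rowLen k - 1)))) := by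
  ext c
  obtain ⟨a, j⟩ := c
  simp only [Set.mem_setOf_eq, Finset.coe_union, Set.mem_union, Finset.coe_image, Set.mem_image,
    Finset.mem_coe, Finset.mem_filter, Finset.mem_range, Prod.mk.injEq]
  constructor
  · rintro ⟨hrem, hcolor⟩
    obtain ⟨ha, hpa⟩ := isRemovable_col.mp hrem
    rcases lt_trichotomy j y with hj | hj | hj
    · exact Or.inl ⟨j, ⟨hj, hpa, by rw [show lam.colLen j - 1 = a by omega]; exact hcolor⟩,
        by omega, rfl⟩
    · exfalso
      rw [hj] at ha
      have hax : a = x - 1 ∧ 1 ≤ x := by omega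
      apply one_ne_zero_zmod hr
      have hc2 : ((((a:ℤ) - (j:ℤ)) : ℤ) : ZMod r) = i := hcolor
      have hb2 : ((((x:ℤ) - (y:ℤ)) : ℤ) : ZMod r) = i := hbi
      have key : (((1 : ℤ)) : ZMod r) = 0 := by
        have e : (1 : ℤ) = ((x:ℤ) - y) - ((a:ℤ) - j) := by omega
        rw [e, Int.cast_sub, hc2, hb2]
        ring
      simpa using key
    · obtain ⟨ha', hpa'⟩ := isRemovable_row.mp hrem
      have hax : a + 1 ≤ x := le_trans (ha ▸ lam.colLen_anti _ _ (by omega)) hcy1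
      exact Or.inr ⟨a, ⟨by omega, hpa', by rw [show lam.rowLen a - 1 = j by omega]; exact hcolor⟩,
        rfl, by omega⟩
  · rintro (⟨j', ⟨hj', hpa, hcolor⟩, rfl, rfl⟩ | ⟨k, ⟨hk, hpa, hcolor⟩, rfl, rfl⟩)
    · refine ⟨isRemovable_col.mpr ⟨?_, hpa⟩, hcolor⟩
      have := hcx j' hj'
      omega
    · refine ⟨isRemovable_row.mpr ⟨?_, hpa⟩, hcolor⟩
      have := hry k hk
      omega

lemma dvd_iff_color (r : ℕ) [NeZero r] {n : ℕ} {u v : ℤ} (hn : (n:ℤ) = u - v) (i : ZMod r)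
    (hv : ((v : ℤ) : ZMod r) = i) : (r ∣ n) ↔ (((u : ℤ) : ZMod r) = i) := by
  have hcast : ((n : ℕ) : ZMod r) = ((u : ℤ) : ZMod r) - ((v : ℤ) : ZMod r) := by
    have : ((n : ℕ) : ZMod r) = (((n : ℤ)) : ZMod r) := by push_cast; ring
    rw [this, hn, Int.cast_sub]
  constructor
  · intro h
    have h0 : ((n : ℕ) : ZMod r) = 0 := (ZMod.natCast_eq_zero_iff _ _).mpr h
    rw [hcast] at h0
    rw [sub_eq_zero] at h0
    rw [h0, hv]
  · intro h
    apply (ZMod.natCast_eq_zero_iff _ _).mp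
    rw [hcast, h, hv, sub_self]

lemma sub_factor_eq {a l : ℕ} {m n : ℤ} (h1 : (a:ℤ) + 1 = m) (h2 : -(l:ℤ) = n) :
    (1:QT) - q ^ (a+1) * t ^ (-(l:ℤ)) = 1 - q ^ m * t ^ n := by
  have h3 : ((a+1:ℕ):ℤ) = m := by exact_mod_cast h1
  rw [npow_zpow_q (a+1), h3, h2]

lemma sub_factor_eq' {a l : ℕ} {m n : ℤ} (h1 : -(a:ℤ) = m) (h2 : (l:ℤ) + 1 = n) :
    (1:QT) - q ^ (-(a:ℤ)) * t ^ (l+1) = 1 - q ^ m * t ^ n := by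
  have h3 : ((l+1:ℕ):ℤ) = n := by exact_mod_cast h2
  rw [npow_zpow_t (l+1), h3, h1]

lemma row_mu_term (r : ℕ) [NeZero r] (lam mu : YoungDiagram) (x y j : ℕ) (i : ZMod r)
    (hmurx : mu.rowLen x = y + 1) (hmucj : mu.colLen j = lam.colLen j)
    (hj : j < y) (hcc : x + 1 ≤ lam.colLen j)
    (hbi : (((x:ℤ) - (y:ℤ) : ℤ) : ZMod r) = i) :
    (if r ∣ hook mu (x, j) then
      (1 - q ^ (arm mu (x,j) + 1) * t ^ (-(leg mu (x,j) : ℤ))) *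
        (1 - q ^ (-(arm mu (x,j) : ℤ)) * t ^ (leg mu (x,j) + 1)) else 1)
    = (if cellColor r (lam.colLen j, j) = i then
      (1 - q * t * (q ^ y * t ^ x) / (q ^ j * t ^ (lam.colLen j))) *
        (1 - (q ^ j * t ^ (lam.colLen j)) / (q ^ y * t ^ x)) else 1) := by
  have harm : arm mu (x, j) = y - j := by
    simp only [arm, hmurx]
    omega
  have hleg : leg mu (x, j) = lam.colLen j - (x + 1) := by
    simp only [leg, hmucj]
  have hiff : (r ∣ hook mu (x, j)) ↔ (cellColor r (lam.colLen j, j) = i) := by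
    have hn : ((hook mu (x,j) : ℕ) : ℤ) = ((lam.colLen j : ℤ) - j) - ((x:ℤ) - y) := by
      simp only [hook, harm, hleg]
      push_cast
      omega
    exact dvd_iff_color r hn i hbi
  rcases eq_or_ne (cellColor r (lam.colLen j, j)) i with h | h
  · rw [if_pos h, if_pos (hiff.mpr h), harm, hleg]
    congr 1
    · rw [qt_mul_mono, mono_div]
      apply sub_factor_eq <;> omega
    · rw [mono_div]
      apply sub_factor_eq' <;> omega
  · rw [if_neg (fun hh => h (hiff.mp hh)), if_neg h]

lemma row_lam_term (r : ℕ) [NeZero r] (lam : YoungDiagram) (x y j : ℕ) (i : ZMod r)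
    (hrx : lam.rowLen x = y)
    (hj : j < y) (hcc : x + 1 ≤ lam.colLen j)
    (hbi : (((x:ℤ) - (y:ℤ) : ℤ) : ZMod r) = i) :
    (if r ∣ hook lam (x, j) then
      (1 - q ^ (arm lam (x,j) + 1) * t ^ (-(leg lam (x,j) : ℤ))) *
        (1 - q ^ (-(arm lam (x,j) : ℤ)) * t ^ (leg lam (x,j) + 1)) else 1)
    = (if cellColor r (lam.colLen j - 1, j) = i then
      (1 - (q ^ y * t ^ x) / (q ^ j * t ^ (lam.colLen j - 1))) *
        (1 - q * t * (q ^ j * t ^ (lam.colLen j - 1)) / (q ^ y * t ^ x)) else 1) := by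
  have harm : arm lam (x, j) = y - (j + 1) := by
    simp only [arm, hrx]
  have hleg : leg lam (x, j) = lam.colLen j - (x + 1) := rfl
  have hiff : (r ∣ hook lam (x, j)) ↔ (cellColor r (lam.colLen j - 1, j) = i) := by
    have hn : ((hook lam (x,j) : ℕ) : ℤ) = (((lam.colLen j - 1 : ℕ) : ℤ) - j) - ((x:ℤ) - y) := by
      simp only [hook, harm, hleg]
      push_cast
      omega
    exact dvd_iff_color r hn i hbi
  rcases eq_or_ne (cellColor r (lam.colLen j - 1, j)) i with h | h
  · rw [if_pos h, if_pos (hiff.mpr h), harm, hleg]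
    congr 1
    · rw [mono_div]
      apply sub_factor_eq <;> omega
    · rw [qt_mul_mono, mono_div]
      apply sub_factor_eq' <;> omega
  · rw [if_neg (fun hh => h (hiff.mp hh)), if_neg h]

lemma dvd_iff_color' (r : ℕ) [NeZero r] {n : ℕ} {u v : ℤ} (hn : (n:ℤ) = v - u) (i : ZMod r)
    (hv : ((v : ℤ) : ZMod r) = i) : (r ∣ n) ↔ (((u : ℤ) : ZMod r) = i) := by
  have hcast : ((n : ℕ) : ZMod r) = ((v : ℤ) : ZMod r) - ((u : ℤ) : ZMod r) := by
    have : ((n : ℕ) : ZMod r) = (((n : ℤ)) : ZMod r) := by push_cast; ring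
    rw [this, hn, Int.cast_sub]
  constructor
  · intro h
    have h0 : ((n : ℕ) : ZMod r) = 0 := (ZMod.natCast_eq_zero_iff _ _).mpr h
    rw [hcast, sub_eq_zero] at h0
    rw [← h0, hv]
  · intro h
    apply (ZMod.natCast_eq_zero_iff _ _).mp
    rw [hcast, h, hv, sub_self]

lemma col_mu_term (r : ℕ) [NeZero r] (lam mu : YoungDiagram) (x y k : ℕ) (i : ZMod r)
    (hmurk : mu.rowLen k = lam.rowLen k) (hmucy : mu.colLen y = x + 1)
    (hk : k < x) (hrr : y + 1 ≤ lam.rowLen k)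
    (hbi : (((x:ℤ) - (y:ℤ) : ℤ) : ZMod r) = i) :
    (if r ∣ hook mu (k, y) then
      (1 - q ^ (arm mu (k,y) + 1) * t ^ (-(leg mu (k,y) : ℤ))) *
        (1 - q ^ (-(arm mu (k,y) : ℤ)) * t ^ (leg mu (k,y) + 1)) else 1)
    = (if cellColor r (k, lam.rowLen k) = i then
      (1 - t * q * (q ^ y * t ^ x) / (t ^ k * q ^ (lam.rowLen k))) *
        (1 - (t ^ k * q ^ (lam.rowLen k)) / (q ^ y * t ^ x)) else 1) := by
  have harm : arm mu (k, y) = lam.rowLen k - (y + 1) := by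
    simp only [arm, hmurk]
  have hleg : leg mu (k, y) = x - k := by
    simp only [leg, hmucy]
    omega
  have hiff : (r ∣ hook mu (k, y)) ↔ (cellColor r (k, lam.rowLen k) = i) := by
    have hn : ((hook mu (k,y) : ℕ) : ℤ) = ((x:ℤ) - y) - ((k : ℤ) - (lam.rowLen k : ℤ)) := by
      simp only [hook, harm, hleg]
      push_cast
      omega
    exact dvd_iff_color' r hn i hbi
  rcases eq_or_ne (cellColor r (k, lam.rowLen k)) i with h | h
  · rw [if_pos h, if_pos (hiff.mpr h), harm, hleg,
      mul_comm (1 - t * q * (q ^ y * t ^ x) / (t ^ k * q ^ (lam.rowLen k)))]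
    congr 1
    · rw [show (t:QT) ^ k * q ^ (lam.rowLen k) = q ^ (lam.rowLen k) * t ^ k by ring, mono_div]
      apply sub_factor_eq <;> omega
    · rw [show (t:QT) * q * (q ^ y * t ^ x) = q ^ (y+1) * t ^ (x+1) by ring,
        show (t:QT) ^ k * q ^ (lam.rowLen k) = q ^ (lam.rowLen k) * t ^ k by ring, mono_div]
      apply sub_factor_eq' <;> omega
  · rw [if_neg (fun hh => h (hiff.mp hh)), if_neg h]

lemma col_lam_term (r : ℕ) [NeZero r] (lam : YoungDiagram) (x y k : ℕ) (i : ZMod r)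
    (hcy : lam.colLen y = x)
    (hk : k < x) (hrr : y + 1 ≤ lam.rowLen k)
    (hbi : (((x:ℤ) - (y:ℤ) : ℤ) : ZMod r) = i) :
    (if r ∣ hook lam (k, y) then
      (1 - q ^ (arm lam (k,y) + 1) * t ^ (-(leg lam (k,y) : ℤ))) *
        (1 - q ^ (-(arm lam (k,y) : ℤ)) * t ^ (leg lam (k,y) + 1)) else 1)
    = (if cellColor r (k, lam.rowLen k - 1) = i then
      (1 - (q ^ y * t ^ x) / (t ^ k * q ^ (lam.rowLen k - 1))) *
        (1 - t * q * (t ^ k * q ^ (lam.rowLen k - 1)) / (q ^ y * t ^ x)) else 1) := by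
  have harm : arm lam (k, y) = lam.rowLen k - (y + 1) := rfl
  have hleg : leg lam (k, y) = x - (k + 1) := by
    simp only [leg, hcy]
  have hiff : (r ∣ hook lam (k, y)) ↔ (cellColor r (k, lam.rowLen k - 1) = i) := by
    have hn : ((hook lam (k,y) : ℕ) : ℤ) =
        ((x:ℤ) - y) - ((k : ℤ) - ((lam.rowLen k - 1 : ℕ) : ℤ)) := by
      simp only [hook, harm, hleg]
      push_cast
      omega
    exact dvd_iff_color' r hn i hbi
  rcases eq_or_ne (cellColor r (k, lam.rowLen k - 1)) i with h | h
  · rw [if_pos h, if_pos (hiff.mpr h), harm, hleg,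
      mul_comm (1 - (q ^ y * t ^ x) / (t ^ k * q ^ (lam.rowLen k - 1)))]
    congr 1
    · rw [show (t:QT) * q * (t ^ k * q ^ (lam.rowLen k - 1)) =
          q ^ (lam.rowLen k - 1 + 1) * t ^ (k + 1) by ring, mono_div]
      apply sub_factor_eq <;> omega
    · rw [show (t:QT) ^ k * q ^ (lam.rowLen k - 1) = q ^ (lam.rowLen k - 1) * t ^ k by ring,
        mono_div]
      apply sub_factor_eq' <;> omega
  · rw [if_neg (fun hh => h (hiff.mp hh)), if_neg h]

open Finset in
lemma cellsplit (lam : YoungDiagram) (x y : ℕ) (hrx : lam.rowLen x = y) (hcy : lam.colLen y = x)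
    (g : ℕ × ℕ → QT) :
    ∏ c ∈ lam.cells, g c =
      ((∏ j ∈ range y, g (x, j)) * ∏ k ∈ range x, g (k, y)) *
        ∏ c ∈ lam.cells.filter (fun c => ¬(c.1 = x) ∧ ¬(c.2 = y)), g c := by
  have e1 : lam.cells.filter (fun c => c.1 = x) = (range y).image (fun j => (x, j)) := by
    ext c
    obtain ⟨a, c⟩ := c
    simp only [mem_filter, YoungDiagram.mem_cells, mem_image, mem_range]
    constructor
    · rintro ⟨hm, h2⟩
      subst h2
      exact ⟨c, by rw [← hrx]; exact YoungDiagram.mem_iff_lt_rowLen.mp hm, rfl⟩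
    · rintro ⟨j, hj, heq⟩
      obtain ⟨h1, h2⟩ := Prod.mk.injEq x j a c |>.mp heq
      subst h1; subst h2
      exact ⟨YoungDiagram.mem_iff_lt_rowLen.mpr (by omega), rfl⟩
  have e2 : (lam.cells.filter (fun c => ¬(c.1 = x))).filter (fun c => c.2 = y) =
      (range x).image (fun k => (k, y)) := by
    ext c
    obtain ⟨a, c⟩ := c
    simp only [mem_filter, YoungDiagram.mem_cells, mem_image, mem_range]
    constructor
    · rintro ⟨⟨hm, h1⟩, h2⟩
      subst h2
      refine ⟨a, ?_, rfl⟩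
      have := YoungDiagram.mem_iff_lt_colLen.mp hm
      omega
    · rintro ⟨k, hk, heq⟩
      obtain ⟨h1, h2⟩ := Prod.mk.injEq k y a c |>.mp heq
      subst h1; subst h2
      exact ⟨⟨YoungDiagram.mem_iff_lt_colLen.mpr (by omega), by omega⟩, rfl⟩
  rw [← Finset.prod_filter_mul_prod_filter_not lam.cells (fun c => c.1 = x),
    ← Finset.prod_filter_mul_prod_filter_not (lam.cells.filter (fun c => ¬(c.1 = x)))
      (fun c => c.2 = y), e1, e2, Finset.filter_filter,
    Finset.prod_image (by intro a _ b _ h; simpa using (Prod.mk.injEq x a x b).mp h),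
    Finset.prod_image (by intro a _ b _ h; simpa using (Prod.mk.injEq a y b y).mp h)]
  ring

open Finset in
lemma nsplit (r : ℕ) (hr : 2 ≤ r) (lam mu : YoungDiagram) (x y : ℕ) (i : ZMod r)
    (hmucells : mu.cells = insert (x, y) lam.cells)
    (hrx : lam.rowLen x = y) (hcy : lam.colLen y = x)
    (hmurx : mu.rowLen x = y + 1) (hmucy : mu.colLen y = x + 1)
    (hmur : ∀ k, k ≠ x → mu.rowLen k = lam.rowLen k)
    (hmuc : ∀ j, j ≠ y → mu.colLen j = lam.colLen j)
    (hcx : ∀ j, j < y → x + 1 ≤ lam.colLen j) (hry : ∀ k, k < x → y + 1 ≤ lam.rowLen k)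
    (hbi : (((x:ℤ) - (y:ℤ) : ℤ) : ZMod r) = i) :
    normN r mu *
      (∏ j ∈ (range y).filter (fun j => cellColor r (lam.colLen j - 1, j) = i),
        (1 - (q ^ y * t ^ x) / (q ^ j * t ^ (lam.colLen j - 1))) *
          (1 - q * t * (q ^ j * t ^ (lam.colLen j - 1)) / (q ^ y * t ^ x))) *
      (∏ k ∈ (range x).filter (fun k => cellColor r (k, lam.rowLen k - 1) = i),
        (1 - (q ^ y * t ^ x) / (t ^ k * q ^ (lam.rowLen k - 1))) *
          (1 - t * q * (t ^ k * q ^ (lam.rowLen k - 1)) / (q ^ y * t ^ x)))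
    = normN r lam *
      (∏ j ∈ (range y).filter (fun j => cellColor r (lam.colLen j, j) = i),
        (1 - q * t * (q ^ y * t ^ x) / (q ^ j * t ^ (lam.colLen j))) *
          (1 - (q ^ j * t ^ (lam.colLen j)) / (q ^ y * t ^ x))) *
      (∏ k ∈ (range x).filter (fun k => cellColor r (k, lam.rowLen k) = i),
        (1 - t * q * (q ^ y * t ^ x) / (t ^ k * q ^ (lam.rowLen k))) *
          (1 - (t ^ k * q ^ (lam.rowLen k)) / (q ^ y * t ^ x))) := by
  have : NeZero r := ⟨by omega⟩
  have hookb : hook mu (x, y) = 1 := by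
    simp only [hook, arm, leg, hmurx, hmucy]
    omega
  have hnd : ¬ (r ∣ hook mu (x, y)) := by
    rw [hookb]
    intro h
    have := Nat.le_of_dvd one_pos h
    omega
  have hNmu : normN r mu = ∏ c ∈ lam.cells,
      (if r ∣ hook mu c then
        (1 - q ^ (arm mu c + 1) * t ^ (-(leg mu c : ℤ))) *
          (1 - q ^ (-(arm mu c : ℤ)) * t ^ (leg mu c + 1)) else 1) := by
    rw [normN, hmucells, Finset.filter_insert, if_neg hnd, Finset.prod_filter]
  have hNlam : normN r lam = ∏ c ∈ lam.cells,
      (if r ∣ hook lam c then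
        (1 - q ^ (arm lam c + 1) * t ^ (-(leg lam c : ℤ))) *
          (1 - q ^ (-(arm lam c : ℤ)) * t ^ (leg lam c + 1)) else 1) := by
    rw [normN, Finset.prod_filter]
  rw [hNmu, hNlam, cellsplit lam x y hrx hcy, cellsplit lam x y hrx hcy]
  have hrow : ∏ j ∈ range y, (if r ∣ hook mu (x, j) then
      (1 - q ^ (arm mu (x, j) + 1) * t ^ (-(leg mu (x, j) : ℤ))) *
        (1 - q ^ (-(arm mu (x, j) : ℤ)) * t ^ (leg mu (x, j) + 1)) else 1) =
      ∏ j ∈ (range y).filter (fun j => cellColor r (lam.colLen j, j) = i),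
        (1 - q * t * (q ^ y * t ^ x) / (q ^ j * t ^ (lam.colLen j))) *
          (1 - (q ^ j * t ^ (lam.colLen j)) / (q ^ y * t ^ x)) := by
    rw [Finset.prod_filter]
    refine Finset.prod_congr rfl (fun j hj => ?_)
    rw [mem_range] at hj
    exact row_mu_term r lam mu x y j i hmurx (hmuc j (by omega)) hj (hcx j hj) hbi
  have hrow' : ∏ j ∈ range y, (if r ∣ hook lam (x, j) then
      (1 - q ^ (arm lam (x, j) + 1) * t ^ (-(leg lam (x, j) : ℤ))) *
        (1 - q ^ (-(arm lam (x, j) : ℤ)) * t ^ (leg lam (x, j) + 1)) else 1) =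
      ∏ j ∈ (range y).filter (fun j => cellColor r (lam.colLen j - 1, j) = i),
        (1 - (q ^ y * t ^ x) / (q ^ j * t ^ (lam.colLen j - 1))) *
          (1 - q * t * (q ^ j * t ^ (lam.colLen j - 1)) / (q ^ y * t ^ x)) := by
    rw [Finset.prod_filter]
    refine Finset.prod_congr rfl (fun j hj => ?_)
    rw [mem_range] at hj
    exact row_lam_term r lam x y j i hrx hj (hcx j hj) hbi
  have hcol : ∏ k ∈ range x, (if r ∣ hook mu (k, y) then
      (1 - q ^ (arm mu (k, y) + 1) * t ^ (-(leg mu (k, y) : ℤ))) *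
        (1 - q ^ (-(arm mu (k, y) : ℤ)) * t ^ (leg mu (k, y) + 1)) else 1) =
      ∏ k ∈ (range x).filter (fun k => cellColor r (k, lam.rowLen k) = i),
        (1 - t * q * (q ^ y * t ^ x) / (t ^ k * q ^ (lam.rowLen k))) *
          (1 - (t ^ k * q ^ (lam.rowLen k)) / (q ^ y * t ^ x)) := by
    rw [Finset.prod_filter]
    refine Finset.prod_congr rfl (fun k hk => ?_)
    rw [mem_range] at hk
    exact col_mu_term r lam mu x y k i (hmur k (by omega)) hmucy hk (hry k hk) hbi
  have hcol' : ∏ k ∈ range x, (if r ∣ hook lam (k, y) then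
      (1 - q ^ (arm lam (k, y) + 1) * t ^ (-(leg lam (k, y) : ℤ))) *
        (1 - q ^ (-(arm lam (k, y) : ℤ)) * t ^ (leg lam (k, y) + 1)) else 1) =
      ∏ k ∈ (range x).filter (fun k => cellColor r (k, lam.rowLen k - 1) = i),
        (1 - (q ^ y * t ^ x) / (t ^ k * q ^ (lam.rowLen k - 1))) *
          (1 - t * q * (t ^ k * q ^ (lam.rowLen k - 1)) / (q ^ y * t ^ x)) := by
    rw [Finset.prod_filter]
    refine Finset.prod_congr rfl (fun k hk => ?_)
    rw [mem_range] at hk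
    exact col_lam_term r lam x y k i hcy hk (hry k hk) hbi
  have hrest : ∏ c ∈ lam.cells.filter (fun c => ¬(c.1 = x) ∧ ¬(c.2 = y)),
      (if r ∣ hook mu c then
        (1 - q ^ (arm mu c + 1) * t ^ (-(leg mu c : ℤ))) *
          (1 - q ^ (-(arm mu c : ℤ)) * t ^ (leg mu c + 1)) else 1) =
      ∏ c ∈ lam.cells.filter (fun c => ¬(c.1 = x) ∧ ¬(c.2 = y)),
      (if r ∣ hook lam c then
        (1 - q ^ (arm lam c + 1) * t ^ (-(leg lam c : ℤ))) *
          (1 - q ^ (-(arm lam c : ℤ)) * t ^ (leg lam c + 1)) else 1) := by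
    refine Finset.prod_congr rfl (fun c hc => ?_)
    rw [Finset.mem_filter] at hc
    obtain ⟨_, hc1, hc2⟩ := hc
    have ha : arm mu c = arm lam c := by
      simp only [arm, hmur c.1 hc1]
    have hl : leg mu c = leg lam c := by
      simp only [leg, hmuc c.2 hc2]
    have hh : hook mu c = hook lam c := by
      simp only [hook, ha, hl]
    rw [ha, hl, hh]
  rw [hrow, hrow', hcol, hcol', hrest]
  ring

lemma color_ne_of_shift (r : ℕ) (hr : 2 ≤ r) {i : ZMod r} {a j x y : ℕ}
    (hbi : cellColor r (x, y) = i)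
    (h : (a:ℤ) - j = (x:ℤ) - y + 1 ∨ (a:ℤ) - j = (x:ℤ) - y - 1) : cellColor r (a, j) ≠ i := by
  intro hc
  apply one_ne_zero_zmod hr
  have ha : ((((a:ℤ) - j) : ℤ) : ZMod r) = i := hc
  have hbb : ((((x:ℤ) - y) : ℤ) : ZMod r) = i := hbi
  rcases h with h | h
  · have : (((1:ℤ)) : ZMod r) = 0 := by
      rw [show (1:ℤ) = ((a:ℤ) - j) - ((x:ℤ) - y) by omega, Int.cast_sub, ha, hbb, sub_self]
    simpa using this
  · have : (((1:ℤ)) : ZMod r) = 0 := by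
      rw [show (1:ℤ) = ((x:ℤ) - y) - ((a:ℤ) - j) by omega, Int.cast_sub, ha, hbb, sub_self]
    simpa using this

lemma mu_addable_iff (r : ℕ) (hr : 2 ≤ r) (lam mu : YoungDiagram) (x y : ℕ) (i : ZMod r)
    (hmem : ∀ c : ℕ × ℕ, c ∈ mu ↔ c = (x, y) ∨ c ∈ lam)
    (hbi : cellColor r (x, y) = i) (c : ℕ × ℕ) :
    (IsAddable mu c ∧ cellColor r c = i) ↔
      ((IsAddable lam c ∧ cellColor r c = i) ∧ c ≠ (x, y)) := by
  obtain ⟨a, j⟩ := c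
  constructor
  · rintro ⟨hadd, hcolor⟩
    obtain ⟨hnm, h1, h2⟩ := isAddable_iff.mp hadd
    have hne : (a, j) ≠ (x, y) := by
      intro h
      exact hnm ((hmem (a, j)).mpr (Or.inl h))
    refine ⟨⟨isAddable_iff.mpr ⟨fun hl => hnm ((hmem _).mpr (Or.inr hl)), ?_, ?_⟩, hcolor⟩, hne⟩
    · rcases h1 with h1 | h1
      · exact Or.inl h1
      · refine Or.inr ?_
        rcases (hmem _).mp h1 with he | he
        · exfalso
          obtain ⟨he1, he2⟩ := Prod.mk.injEq _ _ _ _ |>.mp he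
          have ha1 : 1 ≤ a := by
            by_contra hc
            have : a = 0 := by omega
            rw [this] at he1
            subst he2
            apply hnm
            rw [hmem]
            left
            simp [Prod.ext_iff]
            omega
          exact color_ne_of_shift r hr hbi (Or.inl (by omega)) hcolor
        · exact he
    · rcases h2 with h2 | h2
      · exact Or.inl h2
      · refine Or.inr ?_
        rcases (hmem _).mp h2 with he | he
        · exfalso
          obtain ⟨he1, he2⟩ := Prod.mk.injEq _ _ _ _ |>.mp he
          have hj1 : 1 ≤ j := by
            by_contra hc
            have : j = 0 := by omega
            rw [this] at he2
            subst he1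
            apply hnm
            rw [hmem]
            left
            simp [Prod.ext_iff]
            omega
          exact color_ne_of_shift r hr hbi (Or.inr (by omega)) hcolor
        · exact he
  · rintro ⟨⟨hadd, hcolor⟩, hne⟩
    obtain ⟨hnm, h1, h2⟩ := isAddable_iff.mp hadd
    refine ⟨isAddable_iff.mpr ⟨?_, ?_, ?_⟩, hcolor⟩
    · intro hc
      rcases (hmem _).mp hc with he | he
      · exact hne he
      · exact hnm he
    · rcases h1 with h1 | h1
      · exact Or.inl h1
      · exact Or.inr ((hmem _).mpr (Or.inr h1))
    · rcases h2 with h2 | h2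
      · exact Or.inl h2
      · exact Or.inr ((hmem _).mpr (Or.inr h2))

lemma mu_removable_iff (r : ℕ) (hr : 2 ≤ r) (lam mu : YoungDiagram) (x y : ℕ) (i : ZMod r)
    (hmem : ∀ c : ℕ × ℕ, c ∈ mu ↔ c = (x, y) ∨ c ∈ lam)
    (hbnm : (x, y) ∉ lam)
    (hrx : lam.rowLen x = y) (hcy : lam.colLen y = x)
    (hbi : cellColor r (x, y) = i) (c : ℕ × ℕ) :
    (IsRemovable mu c ∧ cellColor r c = i) ↔
      ((IsRemovable lam c ∧ cellColor r c = i) ∨ c = (x, y)) := by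
  obtain ⟨a, j⟩ := c
  constructor
  · rintro ⟨hrem, hcolor⟩
    obtain ⟨hm, h1, h2⟩ := isRemovable_iff.mp hrem
    rcases (hmem _).mp hm with he | he
    · exact Or.inr he
    · refine Or.inl ⟨isRemovable_iff.mpr ⟨he, ?_, ?_⟩, hcolor⟩
      · exact fun hc => h1 ((hmem _).mpr (Or.inr hc))
      · exact fun hc => h2 ((hmem _).mpr (Or.inr hc))
  · rintro (⟨hrem, hcolor⟩ | he)
    · obtain ⟨hm, h1, h2⟩ := isRemovable_iff.mp hrem
      refine ⟨isRemovable_iff.mpr ⟨(hmem _).mpr (Or.inr hm), ?_, ?_⟩, hcolor⟩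
      · intro hc
        rcases (hmem _).mp hc with he | he
        · obtain ⟨he1, he2⟩ := Prod.mk.injEq _ _ _ _ |>.mp he
          subst he2
          exact color_ne_of_shift r hr hbi (Or.inr (by omega)) hcolor
        · exact h1 he
      · intro hc
        rcases (hmem _).mp hc with he | he
        · obtain ⟨he1, he2⟩ := Prod.mk.injEq _ _ _ _ |>.mp he
          subst he1
          exact color_ne_of_shift r hr hbi (Or.inl (by omega)) hcolor
        · exact h2 he
    · obtain ⟨he1, he2⟩ := Prod.mk.injEq _ _ _ _ |>.mp he
      subst he1; subst he2
      refine ⟨isRemovable_iff.mpr ⟨(hmem _).mpr (Or.inl rfl), ?_, ?_⟩, hbi⟩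
      · intro hc
        rcases (hmem _).mp hc with he | he
        · simp [Prod.ext_iff] at he
        · rw [YoungDiagram.mem_iff_lt_colLen, hcy] at he
          omega
      · intro hc
        rcases (hmem _).mp hc with he | he
        · simp [Prod.ext_iff] at he
        · rw [YoungDiagram.mem_iff_lt_rowLen, hrx] at he
          omega

set_option maxHeartbeats 4000000 in
open Finset in
theorem norm_ratio_cancellation' (r : ℕ) (hr : 2 ≤ r)
    (lam mu : YoungDiagram) (b : ℕ × ℕ) (hb : IsAddable lam b)
    (hmu : mu.cells = insert b lam.cells) (i : ZMod r)
    (hcol : cellColor r b = i) :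
    (normN r mu / normN r lam) *
        ((∏ᶠ c ∈ {c | IsRemovable mu c ∧ cellColor r c = i},
            (1 - q * t * chi c / chi b)) /
          ∏ᶠ c ∈ {c | IsAddable mu c ∧ cellColor r c = i},
            (1 - chi c / chi b)) =
      (∏ᶠ c ∈ {c | IsAddable lam c ∧ cellColor r c = i},
          (1 - q * t * chi b / chi c)) /
        ∏ᶠ c ∈ {c | IsRemovable lam c ∧ cellColor r c = i},
          (1 - chi b / chi c) := by
  obtain ⟨x, y⟩ := b
  obtain ⟨hrx', hrow2⟩ := isAddable_row.mp hb
  obtain ⟨hcy', hcol2⟩ := isAddable_col.mp hb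
  have hrx : lam.rowLen x = y := hrx'.symm
  have hcy : lam.colLen y = x := hcy'.symm
  have hbnm : (x, y) ∉ lam := hb.1
  have hmem : ∀ c : ℕ × ℕ, c ∈ mu ↔ c = (x, y) ∨ c ∈ lam := by
    intro c
    rw [← YoungDiagram.mem_cells, hmu, Finset.mem_insert, YoungDiagram.mem_cells]
  have hcx : ∀ j, j < y → x + 1 ≤ lam.colLen j := by
    intro j hj
    have h1 : (x, j) ∈ lam := YoungDiagram.mem_iff_lt_rowLen.mpr (by omega)
    have := YoungDiagram.mem_iff_lt_colLen.mp h1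
    omega
  have hry : ∀ k, k < x → y + 1 ≤ lam.rowLen k := by
    intro k hk
    have h1 : (k, y) ∈ lam := YoungDiagram.mem_iff_lt_colLen.mpr (by omega)
    have := YoungDiagram.mem_iff_lt_rowLen.mp h1
    omega
  have hcy1 : lam.colLen (y + 1) ≤ x := by
    rw [colLen_le_iff, YoungDiagram.mem_iff_lt_rowLen]
    omega
  have hmurx : mu.rowLen x = y + 1 := by
    apply le_antisymm
    · rw [rowLen_le_iff, hmem]
      push_neg
      refine ⟨by simp [Prod.ext_iff], ?_⟩
      rw [YoungDiagram.mem_iff_lt_rowLen]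
      omega
    · have h1 : (x, y) ∈ mu := (hmem _).mpr (Or.inl rfl)
      rw [YoungDiagram.mem_iff_lt_rowLen] at h1
      omega
  have hmucy : mu.colLen y = x + 1 := by
    apply le_antisymm
    · rw [colLen_le_iff, hmem]
      push_neg
      refine ⟨by simp [Prod.ext_iff], ?_⟩
      rw [YoungDiagram.mem_iff_lt_colLen]
      omega
    · have h1 : (x, y) ∈ mu := (hmem _).mpr (Or.inl rfl)
      rw [YoungDiagram.mem_iff_lt_colLen] at h1
      omega
  have hmur : ∀ k, k ≠ x → mu.rowLen k = lam.rowLen k := by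
    intro k hk
    apply le_antisymm
    · rw [rowLen_le_iff, hmem]
      push_neg
      refine ⟨by simp [Prod.ext_iff]; omega, ?_⟩
      rw [YoungDiagram.mem_iff_lt_rowLen]
      omega
    · rcases Nat.eq_zero_or_pos (lam.rowLen k) with h | h
      · omega
      · have h1 : (k, lam.rowLen k - 1) ∈ lam := YoungDiagram.mem_iff_lt_rowLen.mpr (by omega)
        have h2 := (hmem _).mpr (Or.inr h1)
        rw [YoungDiagram.mem_iff_lt_rowLen] at h2
        omega
  have hmuc : ∀ j, j ≠ y → mu.colLen j = lam.colLen j := by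
    intro j hj
    apply le_antisymm
    · rw [colLen_le_iff, hmem]
      push_neg
      refine ⟨by simp [Prod.ext_iff]; omega, ?_⟩
      rw [YoungDiagram.mem_iff_lt_colLen]
      omega
    · rcases Nat.eq_zero_or_pos (lam.colLen j) with h | h
      · omega
      · have h1 : (lam.colLen j - 1, j) ∈ lam := YoungDiagram.mem_iff_lt_colLen.mpr (by omega)
        have h2 := (hmem _).mpr (Or.inr h1)
        rw [YoungDiagram.mem_iff_lt_colLen] at h2
        omega
  have hbi : (((x:ℤ) - (y:ℤ) : ℤ) : ZMod r) = i := hcol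
  have hbi' : cellColor r (x, y) = i := hcol
  have hSA := addable_set_eq r hr lam x y i hrx hcy hcx hry hcy1 hbi'
  have hSR := removable_set_eq r hr lam x y i hrx hcy hcx hry hcy1 hbi'
  have hbFA : ((x, y) : ℕ × ℕ) ∉ (((Finset.range y).filter (fun j => (j = 0 ∨ lam.colLen j < lam.colLen (j - 1)) ∧ cellColor r (lam.colLen j, j) = i)).image (fun j => (lam.colLen j, j)) ∪ ((Finset.range x).filter (fun k => (k = 0 ∨ lam.rowLen k < lam.rowLen (k - 1)) ∧ cellColor r (k, lam.rowLen k) = i)).image (fun k => (k, lam.rowLen k))) := by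
    simp only [Finset.mem_union, Finset.mem_image, Finset.mem_filter, Finset.mem_range,
      Prod.mk.injEq, not_or, not_exists]
    constructor
    · rintro j ⟨⟨hj, _⟩, _, hje⟩
      omega
    · rintro k ⟨⟨hk, _⟩, hke, _⟩
      omega
  have hbFR : ((x, y) : ℕ × ℕ) ∉ (((Finset.range y).filter (fun j => lam.colLen (j + 1) < lam.colLen j ∧ cellColor r (lam.colLen j - 1, j) = i)).image (fun j => (lam.colLen j - 1, j)) ∪ ((Finset.range x).filter (fun k => lam.rowLen (k + 1) < lam.rowLen k ∧ cellColor r (k, lam.rowLen k - 1) = i)).image (fun k => (k, lam.rowLen k - 1))) := by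
    simp only [Finset.mem_union, Finset.mem_image, Finset.mem_filter, Finset.mem_range,
      Prod.mk.injEq, not_or, not_exists]
    constructor
    · rintro j ⟨⟨hj, _⟩, _, hje⟩
      omega
    · rintro k ⟨⟨hk, _⟩, hke, _⟩
      omega
  have hSAmu : {c : ℕ × ℕ | IsAddable mu c ∧ cellColor r c = i} = ↑(((Finset.range y).filter (fun j => (j = 0 ∨ lam.colLen j < lam.colLen (j - 1)) ∧ cellColor r (lam.colLen j, j) = i)).image (fun j => (lam.colLen j, j)) ∪ ((Finset.range x).filter (fun k => (k = 0 ∨ lam.rowLen k < lam.rowLen (k - 1)) ∧ cellColor r (k, lam.rowLen k) = i)).image (fun k => (k, lam.rowLen k))) := by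
    ext c
    have h2 := Set.ext_iff.mp hSA c
    simp only [Set.mem_setOf_eq] at h2 ⊢
    rw [Finset.mem_coe, mu_addable_iff r hr lam mu x y i hmem hbi' c, h2]
    simp only [Finset.coe_insert, Set.mem_insert_iff, Finset.mem_coe]
    constructor
    · rintro ⟨h3 | h3, h4⟩
      · exact absurd h3 h4
      · exact h3
    · intro h3
      refine ⟨Or.inr h3, fun hc => ?_⟩
      rw [hc] at h3
      exact hbFA h3
  have hSRmu : {c : ℕ × ℕ | IsRemovable mu c ∧ cellColor r c = i} =
      ↑(insert ((x : ℕ), y) (((Finset.range y).filter (fun j => lam.colLen (j + 1) < lam.colLen j ∧ cellColor r (lam.colLen j - 1, j) = i)).image (fun j => (lam.colLen j - 1, j)) ∪ ((Finset.range x).filter (fun k => lam.rowLen (k + 1) < lam.rowLen k ∧ cellColor r (k, lam.rowLen k - 1) = i)).image (fun k => (k, lam.rowLen k - 1)))) := by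
    ext c
    have h2 := Set.ext_iff.mp hSR c
    simp only [Set.mem_setOf_eq] at h2 ⊢
    rw [Finset.mem_coe, mu_removable_iff r hr lam mu x y i hmem hbnm hrx hcy hbi' c, h2,
      Finset.mem_insert]
    tauto
  rw [hSA, hSR, hSAmu, hSRmu, finprod_mem_coe_finset, finprod_mem_coe_finset,
    finprod_mem_coe_finset, finprod_mem_coe_finset,
    Finset.prod_insert hbFR, Finset.prod_insert hbFA]
  have hdisjA : Disjoint
      (Finset.image (fun j => (lam.colLen j, j)) ((Finset.range y).filter
        (fun j => (j = 0 ∨ lam.colLen j < lam.colLen (j - 1)) ∧ cellColor r (lam.colLen j, j) = i)))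
      (Finset.image (fun k => (k, lam.rowLen k)) ((Finset.range x).filter
        (fun k => (k = 0 ∨ lam.rowLen k < lam.rowLen (k - 1)) ∧ cellColor r (k, lam.rowLen k) = i))) := by
    rw [Finset.disjoint_left]
    rintro c hc1 hc2
    simp only [Finset.mem_image, Finset.mem_filter, Finset.mem_range] at hc1 hc2
    obtain ⟨j, ⟨hj, _⟩, rfl⟩ := hc1
    obtain ⟨k, ⟨hk, _⟩, heq⟩ := hc2
    obtain ⟨h1, h2⟩ := Prod.mk.injEq _ _ _ _ |>.mp heq
    have := hry k hk
    omega
  have hdisjR : Disjoint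
      (Finset.image (fun j => (lam.colLen j - 1, j)) ((Finset.range y).filter
        (fun j => lam.colLen (j + 1) < lam.colLen j ∧ cellColor r (lam.colLen j - 1, j) = i)))
      (Finset.image (fun k => (k, lam.rowLen k - 1)) ((Finset.range x).filter
        (fun k => lam.rowLen (k + 1) < lam.rowLen k ∧ cellColor r (k, lam.rowLen k - 1) = i))) := by
    rw [Finset.disjoint_left]
    rintro c hc1 hc2
    simp only [Finset.mem_image, Finset.mem_filter, Finset.mem_range] at hc1 hc2
    obtain ⟨j, ⟨hj, _⟩, rfl⟩ := hc1
    obtain ⟨k, ⟨hk, _⟩, heq⟩ := hc2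
    obtain ⟨h1, h2⟩ := Prod.mk.injEq _ _ _ _ |>.mp heq
    have := hry k hk
    omega
  rw [Finset.prod_union hdisjR, Finset.prod_union hdisjA, Finset.prod_union hdisjR,
    Finset.prod_union hdisjA]
  rw [Finset.prod_image (fun a _ b _ h => ((Prod.mk.injEq _ _ _ _).mp h).2 : ∀ a ∈ (Finset.range y).filter (fun j => lam.colLen (j + 1) < lam.colLen j ∧ cellColor r (lam.colLen j - 1, j) = i), ∀ b ∈ (Finset.range y).filter (fun j => lam.colLen (j + 1) < lam.colLen j ∧ cellColor r (lam.colLen j - 1, j) = i), (fun j => (lam.colLen j - 1, j)) a = (fun j => (lam.colLen j - 1, j)) b → a = b),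
    Finset.prod_image (fun a _ b _ h => ((Prod.mk.injEq _ _ _ _).mp h).2 : ∀ a ∈ (Finset.range y).filter (fun j => (j = 0 ∨ lam.colLen j < lam.colLen (j - 1)) ∧ cellColor r (lam.colLen j, j) = i), ∀ b ∈ (Finset.range y).filter (fun j => (j = 0 ∨ lam.colLen j < lam.colLen (j - 1)) ∧ cellColor r (lam.colLen j, j) = i), (fun j => (lam.colLen j, j)) a = (fun j => (lam.colLen j, j)) b → a = b),
    Finset.prod_image (fun a _ b _ h => ((Prod.mk.injEq _ _ _ _).mp h).1 : ∀ a ∈ (Finset.range x).filter (fun k => lam.rowLen (k + 1) < lam.rowLen k ∧ cellColor r (k, lam.rowLen k - 1) = i), ∀ b ∈ (Finset.range x).filter (fun k => lam.rowLen (k + 1) < lam.rowLen k ∧ cellColor r (k, lam.rowLen k - 1) = i), (fun k => (k, lam.rowLen k - 1)) a = (fun k => (k, lam.rowLen k - 1)) b → a = b),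
    Finset.prod_image (fun a _ b _ h => ((Prod.mk.injEq _ _ _ _).mp h).1 : ∀ a ∈ (Finset.range x).filter (fun k => (k = 0 ∨ lam.rowLen k < lam.rowLen (k - 1)) ∧ cellColor r (k, lam.rowLen k) = i), ∀ b ∈ (Finset.range x).filter (fun k => (k = 0 ∨ lam.rowLen k < lam.rowLen (k - 1)) ∧ cellColor r (k, lam.rowLen k) = i), (fun k => (k, lam.rowLen k)) a = (fun k => (k, lam.rowLen k)) b → a = b)]
  rw [Finset.prod_image (fun a _ b _ h => ((Prod.mk.injEq _ _ _ _).mp h).2 : ∀ a ∈ (Finset.range y).filter (fun j => (j = 0 ∨ lam.colLen j < lam.colLen (j - 1)) ∧ cellColor r (lam.colLen j, j) = i), ∀ b ∈ (Finset.range y).filter (fun j => (j = 0 ∨ lam.colLen j < lam.colLen (j - 1)) ∧ cellColor r (lam.colLen j, j) = i), (fun j => (lam.colLen j, j)) a = (fun j => (lam.colLen j, j)) b → a = b),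
    Finset.prod_image (fun a _ b _ h => ((Prod.mk.injEq _ _ _ _).mp h).1 : ∀ a ∈ (Finset.range x).filter (fun k => (k = 0 ∨ lam.rowLen k < lam.rowLen (k - 1)) ∧ cellColor r (k, lam.rowLen k) = i), ∀ b ∈ (Finset.range x).filter (fun k => (k = 0 ∨ lam.rowLen k < lam.rowLen (k - 1)) ∧ cellColor r (k, lam.rowLen k) = i), (fun k => (k, lam.rowLen k)) a = (fun k => (k, lam.rowLen k)) b → a = b),
    Finset.prod_image (fun a _ b _ h => ((Prod.mk.injEq _ _ _ _).mp h).2 : ∀ a ∈ (Finset.range y).filter (fun j => lam.colLen (j + 1) < lam.colLen j ∧ cellColor r (lam.colLen j - 1, j) = i), ∀ b ∈ (Finset.range y).filter (fun j => lam.colLen (j + 1) < lam.colLen j ∧ cellColor r (lam.colLen j - 1, j) = i), (fun j => (lam.colLen j - 1, j)) a = (fun j => (lam.colLen j - 1, j)) b → a = b),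
    Finset.prod_image (fun a _ b _ h => ((Prod.mk.injEq _ _ _ _).mp h).1 : ∀ a ∈ (Finset.range x).filter (fun k => lam.rowLen (k + 1) < lam.rowLen k ∧ cellColor r (k, lam.rowLen k - 1) = i), ∀ b ∈ (Finset.range x).filter (fun k => lam.rowLen (k + 1) < lam.rowLen k ∧ cellColor r (k, lam.rowLen k - 1) = i), (fun k => (k, lam.rowLen k - 1)) a = (fun k => (k, lam.rowLen k - 1)) b → a = b)]
  simp only [chi]
  have hfb : (1:QT) - q * t * (q ^ y * t ^ x) / (q ^ y * t ^ x) = 1 - q * t := by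
    rw [mul_div_assoc, div_self (mono_ne_zero y x), mul_one]
  rw [hfb]
  have hc1 : ∏ k ∈ (Finset.range x).filter (fun k => lam.rowLen (k + 1) < lam.rowLen k ∧ cellColor r (k, lam.rowLen k - 1) = i), ((1:QT) - q * t * (q ^ (lam.rowLen k - 1) * t ^ k) / (q ^ y * t ^ x)) =
      ∏ k ∈ (Finset.range x).filter (fun k => lam.rowLen (k + 1) < lam.rowLen k ∧ cellColor r (k, lam.rowLen k - 1) = i), ((1:QT) - t * q * (t ^ k * q ^ (lam.rowLen k - 1)) / (q ^ y * t ^ x)) :=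
    Finset.prod_congr rfl (fun k _ => by ring_nf)
  have hc2 : ∏ k ∈ (Finset.range x).filter (fun k => (k = 0 ∨ lam.rowLen k < lam.rowLen (k - 1)) ∧ cellColor r (k, lam.rowLen k) = i), ((1:QT) - q ^ (lam.rowLen k) * t ^ k / (q ^ y * t ^ x)) =
      ∏ k ∈ (Finset.range x).filter (fun k => (k = 0 ∨ lam.rowLen k < lam.rowLen (k - 1)) ∧ cellColor r (k, lam.rowLen k) = i), ((1:QT) - (t ^ k * q ^ (lam.rowLen k)) / (q ^ y * t ^ x)) :=
    Finset.prod_congr rfl (fun k _ => by ring_nf)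
  have hc3 : ∏ k ∈ (Finset.range x).filter (fun k => (k = 0 ∨ lam.rowLen k < lam.rowLen (k - 1)) ∧ cellColor r (k, lam.rowLen k) = i), ((1:QT) - q * t * (q ^ y * t ^ x) / (q ^ (lam.rowLen k) * t ^ k)) =
      ∏ k ∈ (Finset.range x).filter (fun k => (k = 0 ∨ lam.rowLen k < lam.rowLen (k - 1)) ∧ cellColor r (k, lam.rowLen k) = i), ((1:QT) - t * q * (q ^ y * t ^ x) / (t ^ k * q ^ (lam.rowLen k))) :=
    Finset.prod_congr rfl (fun k _ => by ring_nf)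
  have hc4 : ∏ k ∈ (Finset.range x).filter (fun k => lam.rowLen (k + 1) < lam.rowLen k ∧ cellColor r (k, lam.rowLen k - 1) = i), ((1:QT) - (q ^ y * t ^ x) / (q ^ (lam.rowLen k - 1) * t ^ k)) =
      ∏ k ∈ (Finset.range x).filter (fun k => lam.rowLen (k + 1) < lam.rowLen k ∧ cellColor r (k, lam.rowLen k - 1) = i), ((1:QT) - (q ^ y * t ^ x) / (t ^ k * q ^ (lam.rowLen k - 1))) :=
    Finset.prod_congr rfl (fun k _ => by ring_nf)
  rw [hc1, hc2, hc3, hc4]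
  -- telescopes and nsplit
  have hpcdRow : ∀ j, 0 < j → j < y → lam.colLen j = lam.colLen (j - 1) →
      ((cellColor r (lam.colLen j, j) = i) ↔ (cellColor r (lam.colLen (j-1) - 1, j - 1) = i)) := by
    intro j hj0 hjy he
    have h1 := hcx j hjy
    have heq : cellColor r (lam.colLen j, j) = cellColor r (lam.colLen (j-1) - 1, j - 1) := by
      show ((((lam.colLen j : ℕ):ℤ) - (j:ℤ) : ℤ) : ZMod r) =
        ((((lam.colLen (j-1) - 1 : ℕ):ℤ) - ((j-1 : ℕ):ℤ) : ℤ) : ZMod r)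
      congr 1
      omega
    rw [heq]
  have hpcdCol : ∀ k, 0 < k → k < x → lam.rowLen k = lam.rowLen (k - 1) →
      ((cellColor r (k, lam.rowLen k) = i) ↔ (cellColor r (k - 1, lam.rowLen (k-1) - 1) = i)) := by
    intro k hk0 hkx he
    have h1 := hry k hkx
    have heq : cellColor r (k, lam.rowLen k) = cellColor r (k - 1, lam.rowLen (k-1) - 1) := by
      show ((((k : ℕ):ℤ) - ((lam.rowLen k : ℕ):ℤ) : ℤ) : ZMod r) =
        ((((k - 1 : ℕ):ℤ) - ((lam.rowLen (k-1) - 1 : ℕ):ℤ) : ℤ) : ZMod r)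
      congr 1
      omega
    rw [heq]
  have telr := telescope q t (q ^ y * t ^ x) q_ne_zero t_ne_zero (mono_ne_zero y x) x y
    lam.colLen (fun j _ => lam.colLen_anti _ _ (by omega)) hcx hcy
    (fun j => cellColor r (lam.colLen j, j) = i)
    (fun j => cellColor r (lam.colLen j - 1, j) = i) hpcdRow
  have telc := telescope t q (q ^ y * t ^ x) t_ne_zero q_ne_zero (mono_ne_zero y x) y x
    lam.rowLen (fun k _ => lam.rowLen_anti _ _ (by omega)) hry hrx
    (fun k => cellColor r (k, lam.rowLen k) = i)
    (fun k => cellColor r (k, lam.rowLen k - 1) = i) hpcdCol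
  have nsp := nsplit r hr lam mu x y i hmu hrx hcy hmurx hmucy hmur hmuc hcx hry hbi
  have hNlam : normN r lam ≠ 0 := by
    rw [normN, Finset.prod_ne_zero_iff]
    intro c _
    apply mul_ne_zero
    · rw [npow_zpow_q (arm lam c + 1)]
      apply one_sub_qt_zpow_ne
      intro hcon
      omega
    · rw [npow_zpow_t (leg lam c + 1)]
      apply one_sub_qt_zpow_ne
      intro hcon
      omega
  have hGR : (∏ j ∈ (Finset.range y).filter (fun j => cellColor r (lam.colLen j - 1, j) = i),
      ((1:QT) - (q ^ y * t ^ x) / (q ^ j * t ^ (lam.colLen j - 1))) * (1 - q * t * (q ^ j * t ^ (lam.colLen j - 1)) / (q ^ y * t ^ x))) ≠ 0 := by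
    rw [Finset.prod_ne_zero_iff]
    intro j hj
    rw [Finset.mem_filter, Finset.mem_range] at hj
    have h1 := hcx j hj.1
    apply mul_ne_zero
    · exact one_sub_mono_div_ne (by omega)
    · rw [qt_mul_mono]
      exact one_sub_mono_div_ne (by omega)
  have hGC : (∏ k ∈ (Finset.range x).filter (fun k => cellColor r (k, lam.rowLen k - 1) = i),
      ((1:QT) - (q ^ y * t ^ x) / (t ^ k * q ^ (lam.rowLen k - 1))) * (1 - t * q * (t ^ k * q ^ (lam.rowLen k - 1)) / (q ^ y * t ^ x))) ≠ 0 := by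
    rw [Finset.prod_ne_zero_iff]
    intro k hk
    rw [Finset.mem_filter, Finset.mem_range] at hk
    have h1 := hry k hk.1
    apply mul_ne_zero
    · rw [show (t:QT) ^ k * q ^ (lam.rowLen k - 1) = q ^ (lam.rowLen k - 1) * t ^ k by ring]
      exact one_sub_mono_div_ne (by omega)
    · rw [show (t:QT) * q * (t ^ k * q ^ (lam.rowLen k - 1)) =
        q ^ (lam.rowLen k - 1 + 1) * t ^ (k + 1) by ring]
      exact one_sub_mono_div_ne (by omega)
  have hPA1 : (∏ j ∈ (Finset.range y).filter (fun j => (j = 0 ∨ lam.colLen j < lam.colLen (j - 1)) ∧ cellColor r (lam.colLen j, j) = i), ((1:QT) - (q ^ j * t ^ (lam.colLen j)) / (q ^ y * t ^ x))) ≠ 0 := by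
    rw [Finset.prod_ne_zero_iff]
    intro j hj
    rw [Finset.mem_filter, Finset.mem_range] at hj
    exact one_sub_mono_div_ne (by omega)
  have hPA2 : (∏ k ∈ (Finset.range x).filter (fun k => (k = 0 ∨ lam.rowLen k < lam.rowLen (k - 1)) ∧ cellColor r (k, lam.rowLen k) = i), ((1:QT) - (t ^ k * q ^ (lam.rowLen k)) / (q ^ y * t ^ x))) ≠ 0 := by
    rw [Finset.prod_ne_zero_iff]
    intro k hk
    rw [Finset.mem_filter, Finset.mem_range] at hk
    rw [show (t:QT) ^ k * q ^ (lam.rowLen k) = q ^ (lam.rowLen k) * t ^ k by ring]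
    exact one_sub_mono_div_ne (by omega)
  have hPM1 : (∏ j ∈ (Finset.range y).filter (fun j => lam.colLen (j + 1) < lam.colLen j ∧ cellColor r (lam.colLen j - 1, j) = i), ((1:QT) - (q ^ y * t ^ x) / (q ^ j * t ^ (lam.colLen j - 1)))) ≠ 0 := by
    rw [Finset.prod_ne_zero_iff]
    intro j hj
    rw [Finset.mem_filter, Finset.mem_range] at hj
    exact one_sub_mono_div_ne (by omega)
  have hPM2 : (∏ k ∈ (Finset.range x).filter (fun k => lam.rowLen (k + 1) < lam.rowLen k ∧ cellColor r (k, lam.rowLen k - 1) = i), ((1:QT) - (q ^ y * t ^ x) / (t ^ k * q ^ (lam.rowLen k - 1)))) ≠ 0 := by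
    rw [Finset.prod_ne_zero_iff]
    intro k hk
    rw [Finset.mem_filter, Finset.mem_range] at hk
    rw [show (t:QT) ^ k * q ^ (lam.rowLen k - 1) = q ^ (lam.rowLen k - 1) * t ^ k by ring]
    exact one_sub_mono_div_ne (by omega)
  have dRR : (∏ j ∈ (Finset.range y).filter (fun j => lam.colLen (j + 1) < lam.colLen j ∧ cellColor r (lam.colLen j - 1, j) = i),
      ((1:QT) - (q ^ y * t ^ x) / (q ^ j * t ^ (lam.colLen j - 1))) * (1 - q * t * (q ^ j * t ^ (lam.colLen j - 1)) / (q ^ y * t ^ x))) =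
      (∏ j ∈ (Finset.range y).filter (fun j => lam.colLen (j + 1) < lam.colLen j ∧ cellColor r (lam.colLen j - 1, j) = i), ((1:QT) - (q ^ y * t ^ x) / (q ^ j * t ^ (lam.colLen j - 1)))) *
      (∏ j ∈ (Finset.range y).filter (fun j => lam.colLen (j + 1) < lam.colLen j ∧ cellColor r (lam.colLen j - 1, j) = i), ((1:QT) - q * t * (q ^ j * t ^ (lam.colLen j - 1)) / (q ^ y * t ^ x))) := Finset.prod_mul_distrib
  have dRA : (∏ j ∈ (Finset.range y).filter (fun j => (j = 0 ∨ lam.colLen j < lam.colLen (j - 1)) ∧ cellColor r (lam.colLen j, j) = i),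
      ((1:QT) - q * t * (q ^ y * t ^ x) / (q ^ j * t ^ (lam.colLen j))) * (1 - (q ^ j * t ^ (lam.colLen j)) / (q ^ y * t ^ x))) =
      (∏ j ∈ (Finset.range y).filter (fun j => (j = 0 ∨ lam.colLen j < lam.colLen (j - 1)) ∧ cellColor r (lam.colLen j, j) = i), ((1:QT) - q * t * (q ^ y * t ^ x) / (q ^ j * t ^ (lam.colLen j)))) *
      (∏ j ∈ (Finset.range y).filter (fun j => (j = 0 ∨ lam.colLen j < lam.colLen (j - 1)) ∧ cellColor r (lam.colLen j, j) = i), ((1:QT) - (q ^ j * t ^ (lam.colLen j)) / (q ^ y * t ^ x))) := Finset.prod_mul_distrib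
  have dKR : (∏ k ∈ (Finset.range x).filter (fun k => lam.rowLen (k + 1) < lam.rowLen k ∧ cellColor r (k, lam.rowLen k - 1) = i),
      ((1:QT) - (q ^ y * t ^ x) / (t ^ k * q ^ (lam.rowLen k - 1))) * (1 - t * q * (t ^ k * q ^ (lam.rowLen k - 1)) / (q ^ y * t ^ x))) =
      (∏ k ∈ (Finset.range x).filter (fun k => lam.rowLen (k + 1) < lam.rowLen k ∧ cellColor r (k, lam.rowLen k - 1) = i), ((1:QT) - (q ^ y * t ^ x) / (t ^ k * q ^ (lam.rowLen k - 1)))) *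
      (∏ k ∈ (Finset.range x).filter (fun k => lam.rowLen (k + 1) < lam.rowLen k ∧ cellColor r (k, lam.rowLen k - 1) = i), ((1:QT) - t * q * (t ^ k * q ^ (lam.rowLen k - 1)) / (q ^ y * t ^ x))) := Finset.prod_mul_distrib
  have dKA : (∏ k ∈ (Finset.range x).filter (fun k => (k = 0 ∨ lam.rowLen k < lam.rowLen (k - 1)) ∧ cellColor r (k, lam.rowLen k) = i),
      ((1:QT) - t * q * (q ^ y * t ^ x) / (t ^ k * q ^ (lam.rowLen k))) * (1 - (t ^ k * q ^ (lam.rowLen k)) / (q ^ y * t ^ x))) =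
      (∏ k ∈ (Finset.range x).filter (fun k => (k = 0 ∨ lam.rowLen k < lam.rowLen (k - 1)) ∧ cellColor r (k, lam.rowLen k) = i), ((1:QT) - t * q * (q ^ y * t ^ x) / (t ^ k * q ^ (lam.rowLen k)))) *
      (∏ k ∈ (Finset.range x).filter (fun k => (k = 0 ∨ lam.rowLen k < lam.rowLen (k - 1)) ∧ cellColor r (k, lam.rowLen k) = i), ((1:QT) - (t ^ k * q ^ (lam.rowLen k)) / (q ^ y * t ^ x))) := Finset.prod_mul_distrib
  rw [dRR, dRA] at telr
  rw [dKR, dKA] at telc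
  have key : normN r mu *
      ((∏ j ∈ (Finset.range y).filter (fun j => lam.colLen (j + 1) < lam.colLen j ∧ cellColor r (lam.colLen j - 1, j) = i), ((1:QT) - (q ^ y * t ^ x) / (q ^ j * t ^ (lam.colLen j - 1)))) *
        (∏ j ∈ (Finset.range y).filter (fun j => lam.colLen (j + 1) < lam.colLen j ∧ cellColor r (lam.colLen j - 1, j) = i), ((1:QT) - q * t * (q ^ j * t ^ (lam.colLen j - 1)) / (q ^ y * t ^ x)))) *
      ((∏ k ∈ (Finset.range x).filter (fun k => lam.rowLen (k + 1) < lam.rowLen k ∧ cellColor r (k, lam.rowLen k - 1) = i), ((1:QT) - (q ^ y * t ^ x) / (t ^ k * q ^ (lam.rowLen k - 1)))) *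
        (∏ k ∈ (Finset.range x).filter (fun k => lam.rowLen (k + 1) < lam.rowLen k ∧ cellColor r (k, lam.rowLen k - 1) = i), ((1:QT) - t * q * (t ^ k * q ^ (lam.rowLen k - 1)) / (q ^ y * t ^ x)))) =
      normN r lam *
      ((∏ j ∈ (Finset.range y).filter (fun j => (j = 0 ∨ lam.colLen j < lam.colLen (j - 1)) ∧ cellColor r (lam.colLen j, j) = i), ((1:QT) - q * t * (q ^ y * t ^ x) / (q ^ j * t ^ (lam.colLen j)))) *
        (∏ j ∈ (Finset.range y).filter (fun j => (j = 0 ∨ lam.colLen j < lam.colLen (j - 1)) ∧ cellColor r (lam.colLen j, j) = i), ((1:QT) - (q ^ j * t ^ (lam.colLen j)) / (q ^ y * t ^ x)))) *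
      ((∏ k ∈ (Finset.range x).filter (fun k => (k = 0 ∨ lam.rowLen k < lam.rowLen (k - 1)) ∧ cellColor r (k, lam.rowLen k) = i), ((1:QT) - t * q * (q ^ y * t ^ x) / (t ^ k * q ^ (lam.rowLen k)))) *
        (∏ k ∈ (Finset.range x).filter (fun k => (k = 0 ∨ lam.rowLen k < lam.rowLen (k - 1)) ∧ cellColor r (k, lam.rowLen k) = i), ((1:QT) - (t ^ k * q ^ (lam.rowLen k)) / (q ^ y * t ^ x)))) := by
    apply mul_right_cancel₀ (mul_ne_zero hGR hGC)
    linear_combination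
      ((∏ j ∈ (Finset.range y).filter (fun j => lam.colLen (j + 1) < lam.colLen j ∧ cellColor r (lam.colLen j - 1, j) = i), ((1:QT) - (q ^ y * t ^ x) / (q ^ j * t ^ (lam.colLen j - 1)))) *
        (∏ j ∈ (Finset.range y).filter (fun j => lam.colLen (j + 1) < lam.colLen j ∧ cellColor r (lam.colLen j - 1, j) = i), ((1:QT) - q * t * (q ^ j * t ^ (lam.colLen j - 1)) / (q ^ y * t ^ x))) *
       ((∏ k ∈ (Finset.range x).filter (fun k => lam.rowLen (k + 1) < lam.rowLen k ∧ cellColor r (k, lam.rowLen k - 1) = i), ((1:QT) - (q ^ y * t ^ x) / (t ^ k * q ^ (lam.rowLen k - 1)))) *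
        (∏ k ∈ (Finset.range x).filter (fun k => lam.rowLen (k + 1) < lam.rowLen k ∧ cellColor r (k, lam.rowLen k - 1) = i), ((1:QT) - t * q * (t ^ k * q ^ (lam.rowLen k - 1)) / (q ^ y * t ^ x))))) * nsp +
      (normN r lam * (∏ k ∈ (Finset.range x).filter
          (fun k => cellColor r (k, lam.rowLen k) = i),
          ((1 - t * q * (q ^ y * t ^ x) / (t ^ k * q ^ (lam.rowLen k))) * (1 - (t ^ k * q ^ (lam.rowLen k)) / (q ^ y * t ^ x)))) *
       ((∏ k ∈ (Finset.range x).filter (fun k => lam.rowLen (k + 1) < lam.rowLen k ∧ cellColor r (k, lam.rowLen k - 1) = i), ((1:QT) - (q ^ y * t ^ x) / (t ^ k * q ^ (lam.rowLen k - 1)))) *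
        (∏ k ∈ (Finset.range x).filter (fun k => lam.rowLen (k + 1) < lam.rowLen k ∧ cellColor r (k, lam.rowLen k - 1) = i), ((1:QT) - t * q * (t ^ k * q ^ (lam.rowLen k - 1)) / (q ^ y * t ^ x))))) * telr +
      (normN r lam *
       ((∏ j ∈ (Finset.range y).filter (fun j => (j = 0 ∨ lam.colLen j < lam.colLen (j - 1)) ∧ cellColor r (lam.colLen j, j) = i), ((1:QT) - q * t * (q ^ y * t ^ x) / (q ^ j * t ^ (lam.colLen j)))) *
        (∏ j ∈ (Finset.range y).filter (fun j => (j = 0 ∨ lam.colLen j < lam.colLen (j - 1)) ∧ cellColor r (lam.colLen j, j) = i), ((1:QT) - (q ^ j * t ^ (lam.colLen j)) / (q ^ y * t ^ x)))) *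
       (∏ j ∈ (Finset.range y).filter (fun j => cellColor r (lam.colLen j - 1, j) = i),
        ((1 - (q ^ y * t ^ x) / (q ^ j * t ^ (lam.colLen j - 1))) * (1 - q * t * (q ^ j * t ^ (lam.colLen j - 1)) / (q ^ y * t ^ x))))) * telc
  have aux : ∀ Nm Nl B1 B2 A1 A2 C1 C2 D1 D2 u : QT, Nl ≠ 0 → A1 ≠ 0 → A2 ≠ 0 → D1 ≠ 0 →
      D2 ≠ 0 → Nm * (D1 * B1) * (D2 * B2) = Nl * (C1 * A1) * (C2 * A2) →
      Nm / Nl * (u * (B1 * B2) / (A1 * A2)) = u * (C1 * C2) / (D1 * D2) := by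
    intro Nm Nl B1 B2 A1 A2 C1 C2 D1 D2 u h1 h2 h3 h4 h5 h
    field_simp
    linear_combination u * h
  exact aux _ _ _ _ _ _ _ _ _ _ _ hNlam hPA1 hPA2 hPM1 hPM2 key

/-- The hook cancellation identity (Lemma on `N_{λ∪■}/N_λ`). -/
theorem norm_ratio_cancellation (r : ℕ) (hr : 2 ≤ r)
    (lam mu : YoungDiagram) (b : ℕ × ℕ) (hb : IsAddable lam b)
    (hmu : mu.cells = insert b lam.cells) (i : ZMod r)
    (hcol : cellColor r b = i) :
    (normN r mu / normN r lam) *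
        ((∏ᶠ c ∈ {c | IsRemovable mu c ∧ cellColor r c = i},
            (1 - q * t * chi c / chi b)) /
          ∏ᶠ c ∈ {c | IsAddable mu c ∧ cellColor r c = i},
            (1 - chi c / chi b)) =
      (∏ᶠ c ∈ {c | IsAddable lam c ∧ cellColor r c = i},
          (1 - q * t * chi b / chi c)) /
        ∏ᶠ c ∈ {c | IsRemovable lam c ∧ cellColor r c = i},
          (1 - chi b / chi c) := by
  exact norm_ratio_cancellation' r hr lam mu b hb hmu i hcol
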